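/- Let P be a submonoid of a group G. Suppose p₁, q₁, …, p_n, q_n ∈ P and r ∈ P are such that for every j ∈ {1, …, n} the element p_j⁻¹ q_j p_{j+1}⁻¹ q_{j+1} ⋯ p_n⁻¹ q_n · r of G lies in P, and that p₁⁻¹q₁ ⋯ p_n⁻¹q_n = e in G. Then for every j ∈ {1, …, n} the element q_{j}⁻¹ p_{j} q_{j-1}⁻¹ p_{j-1} ⋯ q_1⁻¹ p_1 · r of G also lies in P; in fact q_{j-1}⁻¹ p_{j-1} ⋯ q_1⁻¹ p_1 · r = p_j⁻¹ q_j ⋯ p_n⁻¹ q_n · r in G for each j. -/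

import Mathlib

/-- If `p₁⁻¹q₁ ⋯ p_n⁻¹q_n = e` in `G` and, for each `j`, the element
`p_j⁻¹q_j ⋯ p_n⁻¹q_n · r` lies in the submonoid `P`, then for each `j ∈ {1, …, n}` the
element `q_j⁻¹p_j ⋯ q₁⁻¹p₁ · r` also lies in `P`, and in fact
`q_{j-1}⁻¹p_{j-1} ⋯ q₁⁻¹p₁ · r = p_j⁻¹q_j ⋯ p_n⁻¹q_n · r` in `G`. -/
theorem stmt19 {G : Type*} [Group G] (P : Submonoid G) (n : ℕ) (p q : ℕ → G)
    (hp : ∀ i, 1 ≤ i → i ≤ n → p i ∈ P) (hq : ∀ i, 1 ≤ i → i ≤ n → q i ∈ P)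
    (r : G) (hr : r ∈ P)
    (htot : ((List.range' 1 n).map (fun i => (p i)⁻¹ * q i)).prod = 1)
    (hmem : ∀ j, 1 ≤ j → j ≤ n →
      ((List.range' j (n + 1 - j)).map (fun i => (p i)⁻¹ * q i)).prod * r ∈ P) :
    ∀ j, 1 ≤ j → j ≤ n →
      ((((List.range' 1 j).map (fun i => (q i)⁻¹ * p i)).reverse).prod * r ∈ P) ∧
      ((((List.range' 1 (j - 1)).map (fun i => (q i)⁻¹ * p i)).reverse).prod * r
        = ((List.range' j (n + 1 - j)).map (fun i => (p i)⁻¹ * q i)).prod * r) := by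
  set f : ℕ → G := fun i => (p i)⁻¹ * q i with hf
  -- B_k = reversed product equals inverse of forward product
  have hB : ∀ k : ℕ,
      (((List.range' 1 k).map (fun i => (q i)⁻¹ * p i)).reverse).prod
        = (((List.range' 1 k).map f).prod)⁻¹ := by
    intro k
    rw [List.prod_inv_reverse, List.map_map]
    congr 1
    congr 1
    apply List.map_congr_left
    intro i _
    simp [hf, mul_inv_rev]
  -- key equation: B_{j-1} = A_j for 1 ≤ j ≤ n+1
  have key : ∀ j, 1 ≤ j → j ≤ n + 1 →
      (((List.range' 1 (j - 1)).map (fun i => (q i)⁻¹ * p i)).reverse).prod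
        = ((List.range' j (n + 1 - j)).map f).prod := by
    intro j hj1 hjn
    rw [hB]
    have hsplit : List.range' 1 (j - 1) ++ List.range' j (n + 1 - j) = List.range' 1 n := by
      have := List.range'_append (s := 1) (m := j - 1) (n := n + 1 - j) (step := 1)
      rw [show (1:ℕ)+1*(j-1)=j from by omega, show (j-1)+(n+1-j)=n from by omega] at this
      exact this
    have h1 : (((List.range' 1 (j - 1)).map f).prod)
        * ((List.range' j (n + 1 - j)).map f).prod = 1 := by
      rw [← List.prod_append, ← List.map_append, hsplit, htot]
    exact inv_eq_of_mul_eq_one_right h1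
  intro j hj1 hjn
  have hkeyj := key j hj1 (by omega)
  have hkeyj1 := key (j + 1) (by omega) (by omega)
  simp only [Nat.add_sub_cancel] at hkeyj1
  constructor
  · rw [hkeyj1]
    by_cases h : j = n
    · subst h
      simp [hr]
    · exact hmem (j + 1) (by omega) (by omega)
  · rw [hkeyj]
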